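/- arXiv:1901.09752 — 2 statements merged into one kernel-verified Lean document; each statement's English description precedes it below -/
import Mathlib

section
/- There exists a C² function u : ℝ² → ℝ that satisfies the 'wrong minimal surface equation' (1 + u_x²)·u_xx + 2·u_x·u_y·u_xy + (1 + u_y²)·u_yy = 0 at every point of ℝ² and is not affine linear. Hence the wrong minimal surface equation does not have the Bernstein property, answering a question of L. Simon. -/
/-- First partial derivative in the `x`-direction. -/
noncomputable def ux (u : ℝ × ℝ → ℝ) (p : ℝ × ℝ) : ℝ := fderiv ℝ u p (1, 0)

/-- First partial derivative in the `y`-direction. -/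
noncomputable def uy (u : ℝ × ℝ → ℝ) (p : ℝ × ℝ) : ℝ := fderiv ℝ u p (0, 1)

/-- Second partial derivative `u_xx`. -/
noncomputable def uxx (u : ℝ × ℝ → ℝ) (p : ℝ × ℝ) : ℝ := fderiv ℝ (ux u) p (1, 0)

/-- Second partial derivative `u_xy`. -/
noncomputable def uxy (u : ℝ × ℝ → ℝ) (p : ℝ × ℝ) : ℝ := fderiv ℝ (ux u) p (0, 1)

/-- Second partial derivative `u_yy`. -/
noncomputable def uyy (u : ℝ × ℝ → ℝ) (p : ℝ × ℝ) : ℝ := fderiv ℝ (uy u) p (0, 1)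

open Function

noncomputable section WrongMSEAux

/-- `φ t = t + t³/3`. -/
def phiW (t : ℝ) : ℝ := t + t ^ 3 / 3

lemma phiW_strictMono : StrictMono phiW :=
  strictMono_id.add_monotone
    (((Odd.strictMono_pow (R := ℝ) (⟨1, by norm_num⟩ : Odd 3)).monotone).div_const (by norm_num))

lemma phiW_hasDerivAt (t : ℝ) : HasDerivAt phiW (1 + t ^ 2) t := by
  have h : HasDerivAt phiW (1 + 3 * t ^ 2 / 3) t :=
    (hasDerivAt_id t).add ((hasDerivAt_pow 3 t).div_const 3)
  simpa using h.congr_deriv (by ring)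

lemma phiW_continuous : Continuous phiW := by
  unfold phiW; continuity

lemma phiW_surjective : Function.Surjective phiW := by
  apply phiW_continuous.surjective
  · apply Filter.tendsto_atTop_mono' _ _ Filter.tendsto_id
    filter_upwards [Filter.eventually_ge_atTop (0:ℝ)] with t ht
    have : 0 ≤ t ^ 3 / 3 := by positivity
    simpa [phiW] using this
  · apply Filter.tendsto_atBot_mono' _ _ Filter.tendsto_id
    filter_upwards [Filter.eventually_le_atBot (0:ℝ)] with t ht
    have h3 : t ^ 3 ≤ 0 := Odd.pow_nonpos ⟨1, by norm_num⟩ ht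
    simp only [phiW, id]
    linarith

/-- `ψ`, the inverse of `φ`, as an order isomorphism. -/
def psiIso : ℝ ≃o ℝ := StrictMono.orderIsoOfSurjective phiW phiW_strictMono phiW_surjective

def psiW : ℝ → ℝ := psiIso.symm

lemma phiW_psiW (y : ℝ) : phiW (psiW y) = y :=
  psiIso.apply_symm_apply y

lemma psiW_continuous : Continuous psiW := by
  exact (psiIso.symm : ℝ ≃o ℝ).continuous

lemma one_add_sq_ne (t : ℝ) : (1 : ℝ) + t ^ 2 ≠ 0 := by positivity

lemma psiW_hasDerivAt (y : ℝ) : HasDerivAt psiW (1 + psiW y ^ 2)⁻¹ y :=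
  HasDerivAt.of_local_left_inverse psiW_continuous.continuousAt
    (phiW_hasDerivAt (psiW y)) (one_add_sq_ne _)
    (Filter.Eventually.of_forall phiW_psiW)

lemma psiW_contDiff : ContDiff ℝ 1 psiW := by
  rw [contDiff_one_iff_deriv]
  refine ⟨fun y => (psiW_hasDerivAt y).differentiableAt, ?_⟩
  have : deriv psiW = fun y => (1 + psiW y ^ 2)⁻¹ := by
    funext y; exact (psiW_hasDerivAt y).deriv
  rw [this]
  exact (continuous_const.add (psiW_continuous.pow 2)).inv₀ (fun y => one_add_sq_ne _)

end WrongMSEAux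

noncomputable section WrongMSEAux2

/-- `g' x = ψ(3x)`, so that `(1+g'²)g'' = 3`. -/
def gW (x : ℝ) : ℝ := ∫ t in (0:ℝ)..x, psiW (3 * t)

lemma psi3_continuous : Continuous (fun t : ℝ => psiW (3 * t)) :=
  psiW_continuous.comp (continuous_const.mul continuous_id)

lemma gW_hasDerivAt (x : ℝ) : HasDerivAt gW (psiW (3 * x)) x :=
  (psi3_continuous.integral_hasStrictDerivAt 0 x).hasDerivAt

lemma deriv_gW : deriv gW = fun x => psiW (3 * x) := by
  funext x; exact (gW_hasDerivAt x).deriv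

lemma gW_contDiff : ContDiff ℝ 2 gW := by
  rw [show (2 : WithTop ℕ∞) = 1 + 1 from rfl, contDiff_succ_iff_deriv]
  refine ⟨fun x => (gW_hasDerivAt x).differentiableAt, by simp, ?_⟩
  rw [deriv_gW]
  exact psiW_contDiff.comp ((contDiff_const.mul contDiff_id) : ContDiff ℝ 1 fun t : ℝ => 3 * t)

/-- second derivative of `gW` -/
lemma gW_deriv2 (x : ℝ) :
    HasDerivAt (fun x => psiW (3 * x)) ((1 + psiW (3 * x) ^ 2)⁻¹ * 3) x := by
  have h := (psiW_hasDerivAt (3 * x)).comp x ((hasDerivAt_id x).const_mul 3)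
  simpa [Function.comp_def] using h

end WrongMSEAux2

noncomputable section WrongMSEAux3

def uW (p : ℝ × ℝ) : ℝ := gW p.1 - gW p.2

lemma uW_contDiff : ContDiff ℝ 2 uW :=
  (gW_contDiff.comp contDiff_fst).sub (gW_contDiff.comp contDiff_snd)

open ContinuousLinearMap in
lemma uW_hasFDerivAt (p : ℝ × ℝ) :
    HasFDerivAt uW
      (psiW (3 * p.1) • (fst ℝ ℝ ℝ) - psiW (3 * p.2) • (snd ℝ ℝ ℝ)) p := by
  have h1 : HasFDerivAt (fun q : ℝ × ℝ => gW q.1) (psiW (3 * p.1) • (fst ℝ ℝ ℝ)) p :=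
    (gW_hasDerivAt p.1).comp_hasFDerivAt p hasFDerivAt_fst
  have h2 : HasFDerivAt (fun q : ℝ × ℝ => gW q.2) (psiW (3 * p.2) • (snd ℝ ℝ ℝ)) p :=
    (gW_hasDerivAt p.2).comp_hasFDerivAt p hasFDerivAt_snd
  exact h1.sub h2

lemma ux_uW : ux uW = fun p => psiW (3 * p.1) := by
  funext p
  rw [ux, (uW_hasFDerivAt p).fderiv]
  simp

lemma uy_uW : uy uW = fun p => -psiW (3 * p.2) := by
  funext p
  rw [uy, (uW_hasFDerivAt p).fderiv]
  simp

open ContinuousLinearMap in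
lemma ux_hasFDerivAt (p : ℝ × ℝ) :
    HasFDerivAt (fun q : ℝ × ℝ => psiW (3 * q.1))
      (((1 + psiW (3 * p.1) ^ 2)⁻¹ * 3) • (fst ℝ ℝ ℝ)) p :=
  (gW_deriv2 p.1).comp_hasFDerivAt p hasFDerivAt_fst

open ContinuousLinearMap in
lemma uy_hasFDerivAt (p : ℝ × ℝ) :
    HasFDerivAt (fun q : ℝ × ℝ => -psiW (3 * q.2))
      ((-((1 + psiW (3 * p.2) ^ 2)⁻¹ * 3)) • (snd ℝ ℝ ℝ)) p :=
  (gW_deriv2 p.2).neg.comp_hasFDerivAt p hasFDerivAt_snd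

lemma uxx_uW (p : ℝ × ℝ) : uxx uW p = (1 + psiW (3 * p.1) ^ 2)⁻¹ * 3 := by
  rw [uxx, ux_uW, (ux_hasFDerivAt p).fderiv]
  simp

lemma uxy_uW (p : ℝ × ℝ) : uxy uW p = 0 := by
  rw [uxy, ux_uW, (ux_hasFDerivAt p).fderiv]
  simp

lemma uyy_uW (p : ℝ × ℝ) : uyy uW p = -((1 + psiW (3 * p.2) ^ 2)⁻¹ * 3) := by
  rw [uyy, uy_uW, (uy_hasFDerivAt p).fderiv]
  simp

end WrongMSEAux3

/-- The "wrong minimal surface equation"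
`(1 + u_x²)u_xx + 2u_xu_yu_xy + (1 + u_y²)u_yy = 0` admits an entire non-linear
`C²` solution, hence it does not have the Bernstein property (answering a question
of L. Simon). -/
theorem wrong_minimal_surface_equation_not_bernstein :
    ∃ u : ℝ × ℝ → ℝ, ContDiff ℝ 2 u ∧
      (∀ p : ℝ × ℝ,
        (1 + ux u p ^ 2) * uxx u p + 2 * ux u p * uy u p * uxy u p
          + (1 + uy u p ^ 2) * uyy u p = 0) ∧
      ¬ ∃ a b c : ℝ, ∀ x y : ℝ, u (x, y) = a * x + b * y + c := by
  refine ⟨uW, uW_contDiff, fun p => ?_, ?_⟩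
  · rw [ux_uW, uy_uW, uxx_uW, uxy_uW, uyy_uW]
    have h1 := one_add_sq_ne (psiW (3 * p.1))
    have h2 := one_add_sq_ne (psiW (3 * p.2))
    field_simp
    ring
  · rintro ⟨a, b, c, h⟩
    -- From `u (x, 0) = a x + c` we get `gW x = a x + (c + gW 0)`.
    have hgW : ∀ x : ℝ, gW x = a * x + (c + gW 0) := by
      intro x
      have := h x 0
      simp only [uW] at this
      linarith
    have hderiv : ∀ x : ℝ, psiW (3 * x) = a := by
      intro x
      have h1 : HasDerivAt gW (psiW (3 * x)) x := gW_hasDerivAt x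
      have h2 : HasDerivAt gW a x := by
        have : HasDerivAt (fun x : ℝ => a * x + (c + gW 0)) a x := by
          simpa using ((hasDerivAt_id x).const_mul a).add_const (c + gW 0)
        exact this.congr_of_eventuallyEq (Filter.Eventually.of_forall hgW)
      exact h1.unique h2
    have hψ0 : psiW 0 = 0 := by
      have h0 : phiW 0 = 0 := by simp [phiW]
      have := phiW_psiW 0
      have := phiW_strictMono.injective (a₁ := psiW 0) (a₂ := 0)
        (by rw [phiW_psiW 0, h0])
      exact this
    have ha0 : a = 0 := by have := hderiv 0; simp [hψ0] at this; linarith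
    have ha3 : psiW 3 ≠ 0 := by
      intro hψ3
      have := phiW_psiW 3
      rw [hψ3] at this
      simp [phiW] at this
    have := hderiv 1
    rw [ha0] at this
    norm_num at this
    exact ha3 this
end

section
/- The function u : ℝ² → ℝ, u(x,y) := x² + y², is of class C², is not affine linear, and satisfies L_{0,0}[u] = 0 at every point of ℝ², i.e. (u_x² − u_y²)·u_xx + 4·u_x·u_y·u_xy + (u_y² − u_x²)·u_yy = 0. Hence the equation L_{0,0}[u] = 0 does not have the Bernstein property. -/
lemma hasFDerivAt_sq_norm (p : ℝ × ℝ) :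
    HasFDerivAt (fun p : ℝ × ℝ => p.1 ^ 2 + p.2 ^ 2)
      ((2 * p.1) • ContinuousLinearMap.fst ℝ ℝ ℝ
        + (2 * p.2) • ContinuousLinearMap.snd ℝ ℝ ℝ) p := by
  have h1 : HasFDerivAt (fun p : ℝ × ℝ => p.1 ^ 2)
      ((2 * p.1) • ContinuousLinearMap.fst ℝ ℝ ℝ) p := by
    have := (hasFDerivAt_fst (𝕜 := ℝ) (p := p) (E := ℝ) (F := ℝ)).mul
      (hasFDerivAt_fst (𝕜 := ℝ) (p := p) (E := ℝ) (F := ℝ))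
    simpa [pow_two, two_mul, add_smul, Pi.mul_def] using this
  have h2 : HasFDerivAt (fun p : ℝ × ℝ => p.2 ^ 2)
      ((2 * p.2) • ContinuousLinearMap.snd ℝ ℝ ℝ) p := by
    have := (hasFDerivAt_snd (𝕜 := ℝ) (p := p) (E := ℝ) (F := ℝ)).mul
      (hasFDerivAt_snd (𝕜 := ℝ) (p := p) (E := ℝ) (F := ℝ))
    simpa [pow_two, two_mul, add_smul, Pi.mul_def] using this
  exact h1.add h2

lemma hasFDerivAt_lin (c : ℝ) (p : ℝ × ℝ) :
    HasFDerivAt (fun p : ℝ × ℝ => c * p.1)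
      (c • ContinuousLinearMap.fst ℝ ℝ ℝ) p := by
  exact (hasFDerivAt_fst (𝕜 := ℝ) (p := p) (E := ℝ) (F := ℝ)).const_mul c

lemma hasFDerivAt_lin' (c : ℝ) (p : ℝ × ℝ) :
    HasFDerivAt (fun p : ℝ × ℝ => c * p.2)
      (c • ContinuousLinearMap.snd ℝ ℝ ℝ) p := by
  exact (hasFDerivAt_snd (𝕜 := ℝ) (p := p) (E := ℝ) (F := ℝ)).const_mul c

/-- The function `u(x,y) = x² + y²` is a `C²` entire non-linear solution of
`L_{0,0}[u] = 0`, i.e. of `(u_x² − u_y²)u_xx + 4u_xu_yu_xy + (u_y² − u_x²)u_yy = 0`;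
hence this equation does not have the Bernstein property. -/
theorem L_zero_zero_not_bernstein
    (u : ℝ × ℝ → ℝ) (hu : u = fun p => p.1 ^ 2 + p.2 ^ 2) :
    ContDiff ℝ 2 u ∧
    (¬ ∃ a b c : ℝ, ∀ x y : ℝ, u (x, y) = a * x + b * y + c) ∧
    ∀ p : ℝ × ℝ,
      (ux u p ^ 2 - uy u p ^ 2) * uxx u p + 4 * ux u p * uy u p * uxy u p
        + (uy u p ^ 2 - ux u p ^ 2) * uyy u p = 0 := by
  subst hu
  have hux : ux (fun p : ℝ × ℝ => p.1 ^ 2 + p.2 ^ 2) = fun p => 2 * p.1 := by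
    funext p
    simp [ux, (hasFDerivAt_sq_norm p).fderiv]
  have huy : uy (fun p : ℝ × ℝ => p.1 ^ 2 + p.2 ^ 2) = fun p => 2 * p.2 := by
    funext p
    simp [uy, (hasFDerivAt_sq_norm p).fderiv]
  refine ⟨?_, ?_, ?_⟩
  · exact (contDiff_fst.pow 2).add (contDiff_snd.pow 2)
  · rintro ⟨a, b, c, h⟩
    have h0 := h 0 0
    have h1 := h 1 0
    have h2 := h 2 0
    simp at h0 h1 h2
    nlinarith
  · intro p
    have hxx : uxx (fun p : ℝ × ℝ => p.1 ^ 2 + p.2 ^ 2) p = 2 := by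
      rw [uxx, hux, (hasFDerivAt_lin 2 p).fderiv]; simp
    have hxy : uxy (fun p : ℝ × ℝ => p.1 ^ 2 + p.2 ^ 2) p = 0 := by
      rw [uxy, hux, (hasFDerivAt_lin 2 p).fderiv]; simp
    have hyy : uyy (fun p : ℝ × ℝ => p.1 ^ 2 + p.2 ^ 2) p = 2 := by
      rw [uyy, huy, (hasFDerivAt_lin' 2 p).fderiv]; simp
    rw [hux, huy, hxx, hxy, hyy]
    ring
end
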